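/- For all r, s ∈ [0,∞), the Sinkhorn divergence between the symmetric two-point measures μ_r and μ_s on ℝ with quadratic cost equals S_ε(μ_r, μ_s) = ε·( −log( k_c(r,s) + k_c(r,−s) ) + (1/2)·log(1 + k_c(r,−r)) + (1/2)·log(1 + k_c(s,−s)) ), where k_c(x,y) = exp(−(x−y)²/ε). -/

import Mathlib

set_option maxHeartbeats 1000000


open MeasureTheory Filter Topology Real
open scoped ENNReal

noncomputable section

/-- `γ` is a coupling of `μ` and `ν`: its marginals are `μ` and `ν`. -/
def IsCoupling {X : Type*} [MeasurableSpace X] (μ ν : Measure X) (γ : Measure (X × X)) : Prop :=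
  γ.map Prod.fst = μ ∧ γ.map Prod.snd = ν

/-- The entropic optimal transport cost
`OT_ε(μ,ν) = inf_{γ ∈ Π(μ,ν)} ∫ c dγ + ε·KL(γ | μ⊗ν)`,
where the infimum is (equivalently) taken over the couplings with finite
Kullback–Leibler divergence `KL(γ | μ⊗ν) = ∫ log(dγ/d(μ⊗ν)) dγ`
(couplings with `KL = +∞` do not contribute to the infimum). -/
noncomputable def entOT {X : Type*} [MeasurableSpace X] (ε : ℝ) (c : X → X → ℝ)
    (μ ν : Measure X) : ℝ :=
  sInf { v : ℝ | ∃ γ : Measure (X × X), IsProbabilityMeasure γ ∧ IsCoupling μ ν γ ∧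
    γ ≪ μ.prod ν ∧
    Integrable (fun p => Real.log ((γ.rnDeriv (μ.prod ν)) p).toReal) γ ∧
    v = (∫ p, c p.1 p.2 ∂γ) + ε * ∫ p, Real.log ((γ.rnDeriv (μ.prod ν)) p).toReal ∂γ }

/-- The Sinkhorn divergence
`S_ε(μ,ν) = OT_ε(μ,ν) − (1/2)·OT_ε(μ,μ) − (1/2)·OT_ε(ν,ν)`. -/
noncomputable def sinkhorn {X : Type*} [MeasurableSpace X] (ε : ℝ) (c : X → X → ℝ)
    (μ ν : Measure X) : ℝ :=
  entOT ε c μ ν - (1 / 2) * entOT ε c μ μ - (1 / 2) * entOT ε c ν ν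

/-- The symmetric two-point measure `μ_r = (1/2)δ_r + (1/2)δ_{−r}` on `ℝ`. -/
noncomputable def mu2 (r : ℝ) : Measure ℝ :=
  ((1 : ℝ≥0∞) / 2) • Measure.dirac r + ((1 : ℝ≥0∞) / 2) • Measure.dirac (-r)

/-- The quadratic cost on `ℝ`. -/
noncomputable def c2 : ℝ → ℝ → ℝ := fun x y => (x - y) ^ 2

/-- The Gaussian kernel `k_c(x,y) = exp(−(x−y)²/ε)`. -/
noncomputable def kc (ε x y : ℝ) : ℝ := Real.exp (-(x - y) ^ 2 / ε)

/-! ### Auxiliary lemmas -/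

lemma etoReal {a b : ℝ≥0∞} (ha : a ≠ ⊤) (hb : b ≠ ⊤) (h : a.toReal = b.toReal) : a = b :=
  (ENNReal.toReal_eq_toReal_iff' ha hb).mp h

lemma half_ne_top : (1/2 : ℝ≥0∞) ≠ ⊤ := (ENNReal.div_lt_top (by simp) (by simp)).ne
lemma quarter_ne_top : (1/4 : ℝ≥0∞) ≠ ⊤ := (ENNReal.div_lt_top (by simp) (by simp)).ne
lemma half_add_half : (1/2 : ℝ≥0∞) + 1/2 = 1 := by rw [one_div, ENNReal.inv_two_add_inv_two]
lemma half_mul_half : (1/2 : ℝ≥0∞) * (1/2) = 1/4 := by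
  refine etoReal (ENNReal.mul_ne_top half_ne_top half_ne_top) quarter_ne_top ?_
  rw [ENNReal.toReal_mul]; norm_num

section dsum

variable {α : Type*} [MeasurableSpace α]

/-- A combination of four Dirac measures. -/
def dsum (c₁ c₂ c₃ c₄ : ℝ≥0∞) (p₁ p₂ p₃ p₄ : α) : Measure α :=
  c₁ • Measure.dirac p₁ + c₂ • Measure.dirac p₂ + c₃ • Measure.dirac p₃ + c₄ • Measure.dirac p₄

variable [MeasurableSingletonClass α] {c₁ c₂ c₃ c₄ : ℝ≥0∞} {p₁ p₂ p₃ p₄ : α}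

lemma integrable_dirac_any (g : α → ℝ) (p : α) : Integrable g (Measure.dirac p) :=
  (integrable_const (g p)).congr (ae_eq_dirac g).symm

lemma integrable_dsum (g : α → ℝ) (h₁ : c₁ ≠ ⊤) (h₂ : c₂ ≠ ⊤) (h₃ : c₃ ≠ ⊤) (h₄ : c₄ ≠ ⊤) :
    Integrable g (dsum c₁ c₂ c₃ c₄ p₁ p₂ p₃ p₄) :=
  ((((integrable_dirac_any g p₁).smul_measure h₁).add_measure
      ((integrable_dirac_any g p₂).smul_measure h₂)).add_measure
      ((integrable_dirac_any g p₃).smul_measure h₃)).add_measure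
      ((integrable_dirac_any g p₄).smul_measure h₄)

lemma integral_dsum (g : α → ℝ) (h₁ : c₁ ≠ ⊤) (h₂ : c₂ ≠ ⊤) (h₃ : c₃ ≠ ⊤) (h₄ : c₄ ≠ ⊤) :
    ∫ x, g x ∂(dsum c₁ c₂ c₃ c₄ p₁ p₂ p₃ p₄)
      = c₁.toReal * g p₁ + c₂.toReal * g p₂ + c₃.toReal * g p₃ + c₄.toReal * g p₄ := by
  have I₁ := (integrable_dirac_any g p₁).smul_measure h₁
  have I₂ := (integrable_dirac_any g p₂).smul_measure h₂
  have I₃ := (integrable_dirac_any g p₃).smul_measure h₃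
  have I₄ := (integrable_dirac_any g p₄).smul_measure h₄
  rw [dsum, integral_add_measure ((I₁.add_measure I₂).add_measure I₃) I₄,
    integral_add_measure (I₁.add_measure I₂) I₃, integral_add_measure I₁ I₂,
    integral_smul_measure, integral_smul_measure, integral_smul_measure, integral_smul_measure,
    integral_dirac, integral_dirac, integral_dirac, integral_dirac]
  simp [smul_eq_mul]

lemma dsum_univ : dsum c₁ c₂ c₃ c₄ p₁ p₂ p₃ p₄ Set.univ = c₁ + c₂ + c₃ + c₄ := by
  simp [dsum, Measure.smul_apply]

lemma withDensity_dirac {g : α → ℝ≥0∞} (hg : Measurable g) (p : α) :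
    (Measure.dirac p).withDensity g = g p • Measure.dirac p := by
  ext s hs
  classical
  rw [withDensity_apply _ hs, setLIntegral_dirac' hg hs, Measure.smul_apply,
    Measure.dirac_apply' _ hs, smul_eq_mul]
  by_cases h : p ∈ s <;> simp [h]

lemma withDensity_dsum {g : α → ℝ≥0∞} (hg : Measurable g) :
    (dsum c₁ c₂ c₃ c₄ p₁ p₂ p₃ p₄).withDensity g
      = dsum (c₁ * g p₁) (c₂ * g p₂) (c₃ * g p₃) (c₄ * g p₄) p₁ p₂ p₃ p₄ := by
  rw [dsum, dsum, withDensity_add_measure, withDensity_add_measure, withDensity_add_measure,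
    withDensity_smul_measure, withDensity_smul_measure, withDensity_smul_measure,
    withDensity_smul_measure, withDensity_dirac hg, withDensity_dirac hg, withDensity_dirac hg,
    withDensity_dirac hg, smul_smul, smul_smul, smul_smul, smul_smul]

lemma map_dsum {β : Type*} [MeasurableSpace β] {f : α → β} (hf : Measurable f) :
    (dsum c₁ c₂ c₃ c₄ p₁ p₂ p₃ p₄).map f = dsum c₁ c₂ c₃ c₄ (f p₁) (f p₂) (f p₃) (f p₄) := by
  rw [dsum, dsum, Measure.map_add _ _ hf, Measure.map_add _ _ hf, Measure.map_add _ _ hf,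
    Measure.map_smul, Measure.map_smul, Measure.map_smul, Measure.map_smul,
    Measure.map_dirac' hf, Measure.map_dirac' hf, Measure.map_dirac' hf, Measure.map_dirac' hf]

end dsum

lemma smul_prod_smul {α β : Type*} [MeasurableSpace α] [MeasurableSpace β]
    (c d : ℝ≥0∞) (hc : c ≠ ⊤) (hd : d ≠ ⊤) (μ : Measure α) (ν : Measure β)
    [IsFiniteMeasure μ] [IsFiniteMeasure ν] :
    (c • μ).prod (d • ν) = (c * d) • (μ.prod ν) := by
  haveI : IsFiniteMeasure (c • μ) :=
    ⟨by rw [Measure.smul_apply, smul_eq_mul]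
        exact ENNReal.mul_lt_top hc.lt_top (measure_lt_top μ _)⟩
  haveI : IsFiniteMeasure (d • ν) :=
    ⟨by rw [Measure.smul_apply, smul_eq_mul]
        exact ENNReal.mul_lt_top hd.lt_top (measure_lt_top ν _)⟩
  refine Measure.prod_eq fun s t hs ht => ?_
  simp only [Measure.smul_apply, Measure.prod_prod, smul_eq_mul]
  ring

instance mu2_prob (r : ℝ) : IsProbabilityMeasure (mu2 r) := by
  constructor
  rw [mu2]
  simp only [Measure.add_apply, Measure.smul_apply, measure_univ, smul_eq_mul, mul_one]
  exact half_add_half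

lemma rho_eq (r s : ℝ) :
    (mu2 r).prod (mu2 s)
      = dsum (1/4) (1/4) (1/4) (1/4) ((r, s) : ℝ × ℝ) (r, -s) (-r, s) (-r, -s) := by
  rw [mu2, mu2, Measure.prod_add, Measure.add_prod, Measure.add_prod,
    smul_prod_smul _ _ half_ne_top half_ne_top, smul_prod_smul _ _ half_ne_top half_ne_top,
    smul_prod_smul _ _ half_ne_top half_ne_top, smul_prod_smul _ _ half_ne_top half_ne_top,
    Measure.dirac_prod_dirac, Measure.dirac_prod_dirac, Measure.dirac_prod_dirac,
    Measure.dirac_prod_dirac, half_mul_half, dsum]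
  abel

lemma entropy_ineq {t g : ℝ} (ht : 0 ≤ t) (hg : 0 < g) :
    t * Real.log g + t - g ≤ t * Real.log t := by
  rcases ht.eq_or_lt with h | h
  · simp [← h]; linarith
  · have h1 : Real.log (g / t) ≤ g / t - 1 := Real.log_le_sub_one_of_pos (by positivity)
    have h2 : Real.log (g / t) = Real.log g - Real.log t := Real.log_div hg.ne' h.ne'
    have h3 : t * (g / t) = g := by field_simp
    nlinarith [mul_le_mul_of_nonneg_left h1 ht]

lemma entropy_bound (ε : ℝ) (hε : 0 < ε) (t cc M : ℝ) (ht : 0 ≤ t) (hM : 0 < M) :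
    ε * (t * Real.log M + t - M * Real.exp (-cc / ε))
      ≤ t * cc + ε * (t * Real.log t) := by
  set g := M * Real.exp (-cc / ε) with hg
  have hgpos : 0 < g := by positivity
  have h1 : t * Real.log g + t - g ≤ t * Real.log t := entropy_ineq ht hgpos
  have h2 : Real.log g = Real.log M - cc / ε := by
    rw [hg, Real.log_mul hM.ne' (Real.exp_pos _).ne', Real.log_exp]; ring
  have h4 := mul_le_mul_of_nonneg_left h1 hε.le
  have h5 : ε * (t * Real.log M + t - g) = ε * (t * Real.log g + t - g) + t * cc := by
    rw [h2]; field_simp; ring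
  linarith


lemma entOT_mu2 (ε : ℝ) (hε : 0 < ε) (r s : ℝ) :
    entOT ε c2 (mu2 r) (mu2 s) = ε * (Real.log 2 - Real.log (kc ε r s + kc ε r (-s))) := by
  classical
  have hk1 : 0 < kc ε r s := Real.exp_pos _
  have hk2 : 0 < kc ε r (-s) := Real.exp_pos _
  unfold entOT
  set k₁ := kc ε r s with hk₁def
  set k₂ := kc ε r (-s) with hk₂def
  set K := k₁ + k₂ with hKdef
  have hK : 0 < K := by positivity
  set ρ := (mu2 r).prod (mu2 s) with hρdef
  have hρ : ρ = dsum (1/4) (1/4) (1/4) (1/4) ((r, s) : ℝ × ℝ) (r, -s) (-r, s) (-r, -s) :=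
    rho_eq r s
  haveI : IsProbabilityMeasure ρ := by rw [hρdef]; infer_instance
  set B := ε * (Real.log 2 - Real.log K) with hB
  -- everything is integrable w.r.t. ρ
  have hIρ : ∀ g : ℝ × ℝ → ℝ, Integrable g ρ := fun g => by
    rw [hρ]; exact integrable_dsum g quarter_ne_top quarter_ne_top quarter_ne_top quarter_ne_top
  have hintρ : ∀ g : ℝ × ℝ → ℝ, ∫ p, g p ∂ρ
      = 1/4 * g (r, s) + 1/4 * g (r, -s) + 1/4 * g (-r, s) + 1/4 * g (-r, -s) := fun g => by
    rw [hρ, integral_dsum g quarter_ne_top quarter_ne_top quarter_ne_top quarter_ne_top]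
    norm_num
  -- log of the kernels
  have hlk1 : Real.log k₁ = -(r - s)^2 / ε := by rw [hk₁def, kc, Real.log_exp]
  have hlk2 : Real.log k₂ = -(r + s)^2 / ε := by
    rw [hk₂def, kc, Real.log_exp]; ring_nf
  ---- The witness coupling
  set a := 2 * k₁ / K with hadef
  set b := 2 * k₂ / K with hbdef
  have ha : 0 < a := by positivity
  have hb : 0 < b := by positivity
  have hab : a + b = 2 := by rw [hadef, hbdef, ← add_div, hKdef]; field_simp
  set f0 : ℝ × ℝ → ℝ≥0∞ := fun p => ENNReal.ofReal (if p.1 * p.2 = r * s then a else b)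
    with hf0def
  have hf0m : Measurable f0 := by
    apply ENNReal.measurable_ofReal.comp
    exact Measurable.ite (measurableSet_eq_fun (measurable_fst.mul measurable_snd)
      measurable_const) measurable_const measurable_const
  have hk_eq : r * s = 0 → a = b := by
    intro h
    have : (r - s)^2 = (r + s)^2 := by nlinarith
    rw [hadef, hbdef, hk₁def, hk₂def, kc, kc]
    rw [show r - -s = r + s by ring, this]
  have hv1 : f0 (r, s) = ENNReal.ofReal a := by rw [hf0def]; simp
  have hv4 : f0 (-r, -s) = ENNReal.ofReal a := by
    rw [hf0def]; simp only; rw [if_pos (by ring)]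
  have hv2 : f0 (r, -s) = ENNReal.ofReal b := by
    rw [hf0def]; simp only
    by_cases h : r * s = 0
    · rw [if_pos (by nlinarith), hk_eq h]
    · rw [if_neg (by intro hc; apply h; nlinarith)]
  have hv3 : f0 (-r, s) = ENNReal.ofReal b := by
    rw [hf0def]; simp only
    by_cases h : r * s = 0
    · rw [if_pos (by nlinarith), hk_eq h]
    · rw [if_neg (by intro hc; apply h; nlinarith)]
  set γ := ρ.withDensity f0 with hγdef
  have hγ : γ = dsum (1/4 * ENNReal.ofReal a) (1/4 * ENNReal.ofReal b)
      (1/4 * ENNReal.ofReal b) (1/4 * ENNReal.ofReal a) ((r, s) : ℝ × ℝ) (r, -s) (-r, s) (-r, -s) := by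
    rw [hγdef, hρ, withDensity_dsum hf0m, hv1, hv2, hv3, hv4]
  have hca : (1/4 * ENNReal.ofReal a) ≠ ⊤ := ENNReal.mul_ne_top quarter_ne_top ENNReal.ofReal_ne_top
  have hcb : (1/4 * ENNReal.ofReal b) ≠ ⊤ := ENNReal.mul_ne_top quarter_ne_top ENNReal.ofReal_ne_top
  have hcaR : (1/4 * ENNReal.ofReal a).toReal = a / 4 := by
    rw [ENNReal.toReal_mul, ENNReal.toReal_ofReal ha.le]; norm_num; ring
  have hcbR : (1/4 * ENNReal.ofReal b).toReal = b / 4 := by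
    rw [ENNReal.toReal_mul, ENNReal.toReal_ofReal hb.le]; norm_num; ring
  have hsum : 1/4 * ENNReal.ofReal a + 1/4 * ENNReal.ofReal b = 1/2 := by
    rw [← mul_add, ← ENNReal.ofReal_add ha.le hb.le, hab]
    refine etoReal (ENNReal.mul_ne_top quarter_ne_top (by simp)) half_ne_top ?_
    rw [ENNReal.toReal_mul]; norm_num
  have e1 : 1/4 * ENNReal.ofReal b + 1/4 * ENNReal.ofReal a = 1/2 := by
    rw [add_comm]; exact hsum
  haveI hγprob : IsProbabilityMeasure γ := by
    constructor
    rw [hγ, dsum_univ]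
    have e2 : 1/4 * ENNReal.ofReal a + 1/4 * ENNReal.ofReal b + 1/4 * ENNReal.ofReal b
        + 1/4 * ENNReal.ofReal a
        = (1/4 * ENNReal.ofReal a + 1/4 * ENNReal.ofReal b)
          + (1/4 * ENNReal.ofReal a + 1/4 * ENNReal.ofReal b) := by ring
    rw [e2, hsum, half_add_half]
  have hmarg1 : γ.map Prod.fst = mu2 r := by
    rw [hγ, map_dsum measurable_fst]
    show dsum _ _ _ _ r r (-r) (-r) = mu2 r
    rw [dsum, mu2, ← add_smul, add_assoc, ← add_smul, hsum, e1]
  have hmarg2 : γ.map Prod.snd = mu2 s := by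
    rw [hγ, map_dsum measurable_snd]
    show dsum _ _ _ _ s (-s) s (-s) = mu2 s
    rw [dsum, mu2]
    have e3 : (1/4 * ENNReal.ofReal a) • Measure.dirac s
          + (1/4 * ENNReal.ofReal b) • Measure.dirac (-s)
          + (1/4 * ENNReal.ofReal b) • Measure.dirac s
          + (1/4 * ENNReal.ofReal a) • Measure.dirac (-s)
        = (1/4 * ENNReal.ofReal a + 1/4 * ENNReal.ofReal b) • Measure.dirac s
          + (1/4 * ENNReal.ofReal b + 1/4 * ENNReal.ofReal a) • Measure.dirac (-s) := by
      rw [add_smul, add_smul]; abel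
    rw [e3, hsum, e1]
  have hac : γ ≪ ρ := hγdef ▸ withDensity_absolutelyContinuous ρ f0
  have hrn : γ.rnDeriv ρ =ᵐ[ρ] f0 := by
    rw [hγdef]; exact Measure.rnDeriv_withDensity ρ hf0m
  have hrnγ : γ.rnDeriv ρ =ᵐ[γ] f0 := hrn.filter_mono hac.ae_le
  have hlogeq : (fun p => Real.log ((γ.rnDeriv ρ) p).toReal)
      =ᵐ[γ] fun p => Real.log ((f0 p).toReal) := hrnγ.mono fun p hp => by
    dsimp only; rw [hp]
  have hIγ : ∀ g : ℝ × ℝ → ℝ, Integrable g γ := fun g => by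
    rw [hγ]; exact integrable_dsum g hca hcb hcb hca
  have hintγ : ∀ g : ℝ × ℝ → ℝ, ∫ p, g p ∂γ
      = a/4 * g (r, s) + b/4 * g (r, -s) + b/4 * g (-r, s) + a/4 * g (-r, -s) := fun g => by
    rw [hγ, integral_dsum g hca hcb hcb hca, hcaR, hcbR]
  have hC : ∫ p, c2 p.1 p.2 ∂γ
      = a/2 * (r - s)^2 + b/2 * (r + s)^2 := by
    rw [hintγ (fun p => c2 p.1 p.2)]
    simp only [c2]
    ring_nf
  have hL : ∫ p, Real.log ((γ.rnDeriv ρ) p).toReal ∂γ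
      = a/2 * Real.log a + b/2 * Real.log b := by
    rw [integral_congr_ae hlogeq, hintγ (fun p => Real.log ((f0 p).toReal)), hv1, hv2, hv3, hv4,
      ENNReal.toReal_ofReal ha.le, ENNReal.toReal_ofReal hb.le]
    ring
  have h2k1 : (2 : ℝ) * k₁ ≠ 0 := by positivity
  have h2k2 : (2 : ℝ) * k₂ ≠ 0 := by positivity
  have hla : Real.log a = Real.log 2 + -(r - s)^2/ε - Real.log K := by
    rw [hadef, Real.log_div h2k1 hK.ne', Real.log_mul two_ne_zero hk1.ne', hlk1]
  have hlb2 : Real.log b = Real.log 2 + -(r + s)^2/ε - Real.log K := by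
    rw [hbdef, Real.log_div h2k2 hK.ne', Real.log_mul two_ne_zero hk2.ne', hlk2]
  have hIlog : Integrable (fun p => Real.log ((γ.rnDeriv ρ) p).toReal) γ :=
    (hIγ _).congr hlogeq.symm
  have hveq : (∫ p, c2 p.1 p.2 ∂γ) + ε * ∫ p, Real.log ((γ.rnDeriv ρ) p).toReal ∂γ = B := by
    rw [hC, hL, hla, hlb2, hB]
    have hb2 : b = 2 - a := by linarith
    rw [hb2]
    field_simp
    ring
  have hmem : B ∈ { v : ℝ | ∃ γ : Measure (ℝ × ℝ), IsProbabilityMeasure γ ∧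
      IsCoupling (mu2 r) (mu2 s) γ ∧ γ ≪ ρ ∧
      Integrable (fun p => Real.log ((γ.rnDeriv ρ) p).toReal) γ ∧
      v = (∫ p, c2 p.1 p.2 ∂γ) + ε * ∫ p, Real.log ((γ.rnDeriv ρ) p).toReal ∂γ } :=
    ⟨γ, hγprob, ⟨hmarg1, hmarg2⟩, hac, hIlog, hveq.symm⟩
  ---- The lower bound
  have hlb : ∀ v ∈ { v : ℝ | ∃ γ : Measure (ℝ × ℝ), IsProbabilityMeasure γ ∧
      IsCoupling (mu2 r) (mu2 s) γ ∧ γ ≪ ρ ∧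
      Integrable (fun p => Real.log ((γ.rnDeriv ρ) p).toReal) γ ∧
      v = (∫ p, c2 p.1 p.2 ∂γ) + ε * ∫ p, Real.log ((γ.rnDeriv ρ) p).toReal ∂γ }, B ≤ v := by
    rintro v ⟨γ', hp', -, hac', -, rfl⟩
    haveI := hp'
    set h := γ'.rnDeriv ρ with hhdef
    have hhm : Measurable h := Measure.measurable_rnDeriv _ _
    have hlt : ∀ᵐ p ∂ρ, h p < ⊤ := Measure.rnDeriv_lt_top γ' ρ
    set φ : ℝ × ℝ → ℝ := fun p => (h p).toReal with hφdef
    have key : ∀ g : ℝ × ℝ → ℝ, ∫ p, g p ∂γ' = ∫ p, φ p * g p ∂ρ := by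
      intro g
      have h1 : ρ.withDensity (fun p => ((h p).toNNReal : ℝ≥0∞)) = γ' := by
        rw [withDensity_congr_ae (hlt.mono fun p hp => by rw [ENNReal.coe_toNNReal hp.ne])]
        exact Measure.withDensity_rnDeriv_eq γ' ρ hac'
      have hfm : AEMeasurable (fun p => (h p).toNNReal) ρ :=
        (ENNReal.measurable_toNNReal.comp hhm).aemeasurable
      rw [← h1, integral_withDensity_eq_integral_smul₀ hfm g]
      rfl
    have hone : ∫ p, φ p ∂ρ = 1 := by
      have h2 : ∫ p, φ p ∂ρ = (∫⁻ p, γ'.rnDeriv ρ p ∂ρ).toReal :=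
        integral_toReal hhm.aemeasurable hlt
      rw [h2, Measure.lintegral_rnDeriv hac', measure_univ, ENNReal.toReal_one]
    set M := 2 / K with hMdef
    have hMpos : 0 < M := by positivity
    have hptwise : ∀ p : ℝ × ℝ,
        ε * (φ p * Real.log M + φ p - M * Real.exp (-(c2 p.1 p.2) / ε))
          ≤ φ p * c2 p.1 p.2 + ε * (φ p * Real.log (φ p)) :=
      fun p => entropy_bound ε hε (φ p) (c2 p.1 p.2) M ENNReal.toReal_nonneg hMpos
    have hmono := integral_mono (hIρ _) (hIρ _) hptwise
    have hkint : ∫ p, Real.exp (-(c2 p.1 p.2) / ε) ∂ρ = K / 2 := by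
      rw [hintρ (fun p => Real.exp (-(c2 p.1 p.2) / ε))]
      simp only [c2]
      rw [hKdef, hk₁def, hk₂def, kc, kc]
      rw [show r - -s = r + s by ring, show (-r - s)^2 = (r + s)^2 by ring,
        show (-r - -s)^2 = (r - s)^2 by ring]
      ring
    have hlhs : ∫ p, ε * (φ p * Real.log M + φ p - M * Real.exp (-(c2 p.1 p.2) / ε)) ∂ρ = B := by
      rw [integral_const_mul]
      have : ∫ p, (φ p * Real.log M + φ p - M * Real.exp (-(c2 p.1 p.2) / ε)) ∂ρ
          = (∫ p, φ p ∂ρ) * Real.log M + (∫ p, φ p ∂ρ)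
            - M * ∫ p, Real.exp (-(c2 p.1 p.2) / ε) ∂ρ := by
        rw [integral_sub (by exact (hIρ _).add (hIρ _)) (hIρ _), integral_add (hIρ _) (hIρ _),
          integral_mul_const, integral_const_mul]
      rw [this, hone, hkint, hB, hMdef, Real.log_div two_ne_zero hK.ne']
      field_simp
      ring
    have hrhs : ∫ p, (φ p * c2 p.1 p.2 + ε * (φ p * Real.log (φ p))) ∂ρ
        = (∫ p, c2 p.1 p.2 ∂γ') + ε * ∫ p, Real.log ((γ'.rnDeriv ρ) p).toReal ∂γ' := by
      rw [integral_add (hIρ _) (hIρ _), integral_const_mul, key (fun p => c2 p.1 p.2),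
        key (fun p => Real.log ((γ'.rnDeriv ρ) p).toReal)]
    rw [← hrhs]
    rw [hlhs] at hmono
    exact hmono
  exact le_antisymm (csInf_le ⟨B, hlb⟩ hmem) (le_csInf ⟨B, hmem⟩ hlb)

/-- **Sinkhorn divergence between symmetric two-point measures.** For `r, s ≥ 0`,
`S_ε(μ_r, μ_s) = ε·(−log(k_c(r,s)+k_c(r,−s)) + (1/2)log(1+k_c(r,−r)) + (1/2)log(1+k_c(s,−s)))`. -/
theorem stmt5 (ε : ℝ) (hε : 0 < ε) (r s : ℝ) (hr : 0 ≤ r) (hs : 0 ≤ s) :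
    sinkhorn ε c2 (mu2 r) (mu2 s)
      = ε * (-Real.log (kc ε r s + kc ε r (-s))
          + (1 / 2) * Real.log (1 + kc ε r (-r))
          + (1 / 2) * Real.log (1 + kc ε s (-s))) := by
  rw [sinkhorn, entOT_mu2 ε hε r s, entOT_mu2 ε hε r r, entOT_mu2 ε hε s s]
  rw [show kc ε r r = 1 by rw [kc]; simp, show kc ε s s = 1 by rw [kc]; simp]
  ring
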